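/- arXiv:2602.07171 — 6 statements merged into one kernel-verified Lean document; each statement's English description precedes it below -/
import Mathlib

section
/- Let v be a positive integer with gcd(v, 6) = 1. Then the absolute value of the resultant of Φ₆(t) = t² - t + 1 and t^v + 1 equals 3. -/
open Polynomial

/-- The Sylvester matrix of two integer polynomials. -/
noncomputable def sylvester (f g : Polynomial ℤ) :
    Matrix (Fin (f.natDegree + g.natDegree)) (Fin (f.natDegree + g.natDegree)) ℤ :=
  Matrix.of fun i j =>
    if (i : ℕ) < g.natDegree then
      (if (i : ℕ) ≤ (j : ℕ) then f.coeff ((j : ℕ) - (i : ℕ)) else 0)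
    else
      (if (i : ℕ) - g.natDegree ≤ (j : ℕ) then
        g.coeff ((j : ℕ) - ((i : ℕ) - g.natDegree)) else 0)

/-- The resultant of two integer polynomials, as the determinant of the Sylvester matrix. -/
noncomputable def res (f g : Polynomial ℤ) : ℤ :=
  (_root_.sylvester f g).det

section Aux

lemma fdeg : (X^2 - X + 1 : ℤ[X]).natDegree = 2 := by compute_degree!
lemma fdegree : (X^2 - X + 1 : ℤ[X]).degree = 2 := by compute_degree!
lemma fmonic : (X^2 - X + 1 : ℤ[X]).Monic := by monicity!

lemma fcoeff (n : ℕ) : (X^2 - X + 1 : ℤ[X]).coeff n =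
    if n = 0 then 1 else if n = 1 then -1 else if n = 2 then 1 else 0 := by
  rcases n with _|_|_|n <;>
    simp [coeff_add, coeff_sub, coeff_X_pow, coeff_one, coeff_X]

lemma gdeg (v : ℕ) : ((X:ℤ[X])^v + 1).natDegree = v := by
  rw [← C_1, natDegree_X_pow_add_C]

lemma mod_of_dvd (g c : ℤ[X]) (hdvd : (X^2 - X + 1 : ℤ[X]) ∣ (g - c))
    (hdeg : c.degree < 2) : g %ₘ (X^2 - X + 1) = c := by
  have h1 : g = (g - c) + c := by ring
  rw [h1, add_modByMonic,
    (modByMonic_eq_zero_iff_dvd fmonic).mpr hdvd, zero_add,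
    (modByMonic_eq_self_iff fmonic).mpr (by rw [fdegree]; exact hdeg)]

lemma dvd6 : (X^2 - X + 1 : ℤ[X]) ∣ (X^6 - 1) := ⟨X^4 + X^3 - X - 1, by ring⟩

lemma mod_case1 (k : ℕ) : ((X:ℤ[X])^(6*k+1) + 1) %ₘ (X^2 - X + 1) = X + 1 := by
  apply mod_of_dvd
  · have d2 : (X^6 - 1 : ℤ[X]) ∣ (((X:ℤ[X])^6)^k - 1^k) := sub_dvd_pow_sub_pow _ _ k
    have h1 : ((X:ℤ[X])^(6*k+1) + 1) - (X + 1) = (((X:ℤ[X])^6)^k - 1^k) * X := by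
      rw [pow_add, pow_mul, pow_one]; ring
    rw [h1]
    exact (dvd6.trans d2).mul_right X
  · exact lt_of_le_of_lt (show (X+1:ℤ[X]).degree ≤ 1 by compute_degree) (by decide)

lemma mod_case5 (k : ℕ) : ((X:ℤ[X])^(6*k+5) + 1) %ₘ (X^2 - X + 1) = 2 - X := by
  apply mod_of_dvd
  · have d2 : (X^6 - 1 : ℤ[X]) ∣ (((X:ℤ[X])^6)^k - 1^k) := sub_dvd_pow_sub_pow _ _ k
    have h1 : ((X:ℤ[X])^(6*k+5) + 1) - (2 - X) =
        (((X:ℤ[X])^6)^k - 1^k) * X^5 + (X^5 + X - 1) := by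
      rw [pow_add, pow_mul]; ring
    rw [h1]
    exact dvd_add ((dvd6.trans d2).mul_right _) ⟨X^3 + X^2 - 1, by ring⟩
  · exact lt_of_le_of_lt (show (2-X:ℤ[X]).degree ≤ 1 by compute_degree) (by decide)

def rowEquiv (v : ℕ) : Fin (v+2) ≃ Fin v ⊕ Fin 2 where
  toFun t := if h : (t:ℕ) < v then Sum.inl ⟨t, h⟩ else Sum.inr ⟨(t:ℕ) - v, by omega⟩
  invFun s := Sum.elim (fun i : Fin v => (⟨(i:ℕ), by omega⟩ : Fin (v+2)))
    (fun j : Fin 2 => (⟨v + (j:ℕ), by omega⟩ : Fin (v+2))) s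
  left_inv t := by
    dsimp only
    by_cases h : (t:ℕ) < v
    · rw [dif_pos h]; exact Fin.ext rfl
    · rw [dif_neg h]; exact Fin.ext (by simp; omega)
  right_inv s := by
    rcases s with i | j
    · dsimp only [Sum.elim_inl]
      rw [dif_pos (show ((⟨(i:ℕ), by omega⟩ : Fin (v+2)):ℕ) < v from i.isLt)]
    · dsimp only [Sum.elim_inr]
      rw [dif_neg (show ¬ ((⟨v + (j:ℕ), by omega⟩ : Fin (v+2)):ℕ) < v by simp)]
      exact congrArg Sum.inr (Fin.ext (by simp))

def colEquiv (v : ℕ) : Fin (v+2) ≃ Fin v ⊕ Fin 2 where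
  toFun t := if h : (t:ℕ) < 2 then Sum.inr ⟨t, h⟩ else Sum.inl ⟨(t:ℕ) - 2, by omega⟩
  invFun s := Sum.elim (fun i : Fin v => (⟨(i:ℕ) + 2, by omega⟩ : Fin (v+2)))
    (fun j : Fin 2 => (⟨(j:ℕ), by omega⟩ : Fin (v+2))) s
  left_inv t := by
    dsimp only
    by_cases h : (t:ℕ) < 2
    · rw [dif_pos h]; exact Fin.ext rfl
    · rw [dif_neg h]; exact Fin.ext (by simp; omega)
  right_inv s := by
    rcases s with i | j
    · dsimp only [Sum.elim_inl]
      rw [dif_neg (show ¬ ((⟨(i:ℕ) + 2, by omega⟩ : Fin (v+2)):ℕ) < 2 by simp)]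
      exact congrArg Sum.inl (Fin.ext (by simp))
    · dsimp only [Sum.elim_inr]
      rw [dif_pos (show ((⟨(j:ℕ), by omega⟩ : Fin (v+2)):ℕ) < 2 from j.isLt)]

lemma rowEquiv_symm_inl (v : ℕ) (i : Fin v) :
    (rowEquiv v).symm (Sum.inl i) = ⟨(i:ℕ), by omega⟩ := rfl
lemma rowEquiv_symm_inr (v : ℕ) (j : Fin 2) :
    (rowEquiv v).symm (Sum.inr j) = ⟨v + (j:ℕ), by omega⟩ := rfl
lemma colEquiv_symm_inl (v : ℕ) (i : Fin v) :
    (colEquiv v).symm (Sum.inl i) = ⟨(i:ℕ) + 2, by omega⟩ := rfl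
lemma colEquiv_symm_inr (v : ℕ) (j : Fin 2) :
    (colEquiv v).symm (Sum.inr j) = ⟨(j:ℕ), by omega⟩ := rfl

lemma rot_eq (v : ℕ) : (rowEquiv v).trans (colEquiv v).symm
    = finRotate (v+2) * finRotate (v+2) := by
  apply Equiv.ext
  intro t
  rw [Equiv.Perm.mul_apply, Equiv.trans_apply]
  apply Fin.ext
  simp only [finRotate_succ_apply, Fin.val_add, Fin.val_one]
  by_cases h : (t:ℕ) < v
  · rw [show rowEquiv v t = Sum.inl ⟨t, h⟩ from dif_pos h, colEquiv_symm_inl]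
    simp only [Fin.val_mk]
    rw [Nat.mod_eq_of_lt (show (t:ℕ)+1 < v+2 by omega), Nat.mod_eq_of_lt (by omega)]
  · rw [show rowEquiv v t = Sum.inr ⟨(t:ℕ) - v, by omega⟩ from dif_neg h, colEquiv_symm_inr]
    simp only [Fin.val_mk]
    rcases (show (t:ℕ) = v ∨ (t:ℕ) = v + 1 from by have := t.isLt; omega) with h2 | h2 <;>
      rw [h2]
    · rw [Nat.mod_eq_of_lt (show v+1 < v+2 by omega),
        show v + 1 + 1 = v + 2 from rfl, Nat.mod_self]
      omega
    · rw [show v + 1 + 1 = v + 2 from rfl, Nat.mod_self,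
        Nat.mod_eq_of_lt (show 0+1 < v+2 by omega)]
      omega

lemma sign_rot (v : ℕ) :
    Equiv.Perm.sign ((rowEquiv v).trans (colEquiv v).symm) = 1 := by
  rw [rot_eq, map_mul, Int.units_mul_self]

lemma conv_sum (v : ℕ) (p : ℤ[X]) (hp : ∀ k, v ≤ k → p.coeff k = 0) (j : Fin (v+2)) :
    ∑ k : Fin (v+2), (if (k:ℕ) < v then p.coeff k else 0) *
      (if (k:ℕ) ≤ (j:ℕ) then (X^2 - X + 1 : ℤ[X]).coeff ((j:ℕ) - (k:ℕ)) else 0)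
    = (p * (X^2 - X + 1)).coeff (j:ℕ) := by
  rw [Polynomial.coeff_mul, Finset.Nat.sum_antidiagonal_eq_sum_range_succ_mk,
    Fin.sum_univ_eq_sum_range (fun k => (if k < v then p.coeff k else 0) *
      (if k ≤ (j:ℕ) then (X^2 - X + 1 : ℤ[X]).coeff ((j:ℕ) - k) else 0)) (v+2)]
  rw [← Finset.sum_subset (Finset.range_subset_range.mpr (show (j:ℕ)+1 ≤ v+2 by omega))
    (fun k _ hnk => by
      have hk : ¬ (k ≤ (j:ℕ)) := by simp only [Finset.mem_range] at hnk; omega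
      simp [hk])]
  refine Finset.sum_congr rfl (fun k hk => ?_)
  have hk' : k ≤ (j:ℕ) := by simp only [Finset.mem_range] at hk; omega
  by_cases h : k < v
  · simp [h, hk']
  · simp [h, hk', hp k (by omega)]

end Aux

theorem stmt_5 (v : ℕ) (hv : 0 < v) (hgcd : Nat.gcd v 6 = 1) :
    |res (X ^ 2 - X + 1) (X ^ v + 1)| = 3 := by
  -- Step 0: identify the remainder
  obtain ⟨a, b, hr, hab⟩ :
      ∃ a b : ℤ, ((X:ℤ[X])^v + 1) %ₘ (X^2 - X + 1) = C a + C b * X ∧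
        a^2 + a*b + b^2 = 3 := by
    have h2 : ¬ (2 ∣ v) := fun h => by
      have : (2:ℕ) ∣ Nat.gcd v 6 := Nat.dvd_gcd h (by norm_num)
      omega
    have h3 : ¬ (3 ∣ v) := fun h => by
      have : (3:ℕ) ∣ Nat.gcd v 6 := Nat.dvd_gcd h (by norm_num)
      omega
    rcases (show v % 6 = 1 ∨ v % 6 = 5 by omega) with h | h
    · refine ⟨1, 1, ?_, by ring⟩
      rw [show v = 6 * (v / 6) + 1 by omega, mod_case1]
      simp
      ring
    · refine ⟨2, -1, ?_, by ring⟩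
      rw [show v = 6 * (v / 6) + 5 by omega, mod_case5]
      simp
      ring
  set f : ℤ[X] := X^2 - X + 1 with hfdef
  set g : ℤ[X] := X^v + 1 with hgdef
  have hfm : f.Monic := fmonic
  have hn : f.natDegree + g.natDegree = v + 2 := by
    rw [hfdef, hgdef, fdeg, gdeg]
    omega
  have hgd' : g.natDegree = v := by rw [hgdef, gdeg]
  let e : Fin (v+2) ≃ Fin (f.natDegree + g.natDegree) := finCongr hn.symm
  set M : Matrix (Fin (v+2)) (Fin (v+2)) ℤ := (_root_.sylvester f g).submatrix e e with hMdef
  have hres : res f g = M.det :=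
    (Matrix.det_submatrix_equiv_self e (_root_.sylvester f g)).symm
  have hM : ∀ i j : Fin (v+2), M i j =
      if (i:ℕ) < v then (if (i:ℕ) ≤ (j:ℕ) then f.coeff ((j:ℕ)-(i:ℕ)) else 0)
      else (if (i:ℕ) - v ≤ (j:ℕ) then g.coeff ((j:ℕ)-((i:ℕ)-v)) else 0) := by
    intro i j
    show _root_.sylvester f g (e i) (e j) = _
    simp only [_root_.sylvester, Matrix.of_apply, hgd', e, finCongr_apply, Fin.coe_cast]
  -- the division data
  set q : ℤ[X] := g /ₘ f with hqdef
  set r : ℤ[X] := g %ₘ f with hrdef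
  have hfg : r + f * q = g := modByMonic_add_div g f
  have hrc : ∀ k : ℕ, r.coeff k = if k = 0 then a else if k = 1 then b else 0 := by
    intro k
    rw [hr]
    simp only [coeff_add, coeff_C_mul, coeff_X, coeff_C]
    rcases k with _|_|k <;> norm_num
  have hq0 : ∀ k, v - 1 ≤ k → q.coeff k = 0 := by
    by_cases hv1 : v = 1
    · have hq' : q = 0 := by
        rw [hqdef, divByMonic_eq_zero_iff hfm]
        rw [hgdef, hv1, pow_one, hfdef, fdegree]
        exact lt_of_le_of_lt (show (X+1:ℤ[X]).degree ≤ 1 by compute_degree) (by decide)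
      simp [hq']
    · intro k hk
      apply coeff_eq_zero_of_natDegree_lt
      have hqd : q.natDegree = v - 2 := by
        rw [hqdef, natDegree_divByMonic g hfm, hgd', hfdef, fdeg]
      omega
  set c2 : ℤ[X] := X * q + C b with hc2def
  have hc20 : ∀ k, v ≤ k → c2.coeff k = 0 := by
    intro k hk
    rw [hc2def, coeff_add, coeff_C]
    rcases k with _|k
    · omega
    · rw [coeff_X_mul, hq0 k (by omega), if_neg (by omega)]
      ring
  set s : ℤ[X] := X * r - C b * f with hsdef
  have hsc : ∀ k : ℕ, s.coeff k = if k = 0 then -b else if k = 1 then a + b else 0 := by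
    have hs : s = C (-b) + C (a+b) * X := by
      rw [hsdef, hr, hfdef, map_neg, map_add]; ring
    intro k
    rw [hs]
    simp only [coeff_add, coeff_C_mul, coeff_X, coeff_C]
    rcases k with _|_|k <;> norm_num
  -- the row operation matrix
  set N : Matrix (Fin (v+2)) (Fin (v+2)) ℤ := Matrix.of (fun i j =>
    if (i:ℕ) = v ∧ (j:ℕ) < v then q.coeff (j:ℕ)
    else if (i:ℕ) = v + 1 ∧ (j:ℕ) < v then c2.coeff (j:ℕ) else 0) with hNdef
  have hNa : ∀ i j : Fin (v+2), N i j =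
      if (i:ℕ) = v ∧ (j:ℕ) < v then q.coeff (j:ℕ)
      else if (i:ℕ) = v + 1 ∧ (j:ℕ) < v then c2.coeff (j:ℕ) else 0 := fun i j => rfl
  set E : Matrix (Fin (v+2)) (Fin (v+2)) ℤ := 1 - N with hEdef
  have hdetE : E.det = 1 := by
    have htri : E.BlockTriangular OrderDual.toDual := by
      intro i j hij
      have h1 : (i:ℕ) < (j:ℕ) := hij
      rw [hEdef, Matrix.sub_apply, Matrix.one_apply_ne (Fin.ne_of_lt (Fin.lt_def.mpr h1)),
        hNa, if_neg (fun hc => by omega), if_neg (fun hc => by omega)]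
      ring
    rw [Matrix.det_of_lowerTriangular E htri]
    apply Finset.prod_eq_one
    intro i _
    rw [hEdef, Matrix.sub_apply, Matrix.one_apply_eq, hNa,
      if_neg (fun hc => by omega), if_neg (fun hc => by omega)]
    ring
  set M2 : Matrix (Fin (v+2)) (Fin (v+2)) ℤ := E * M with hM2def
  have hdetM2 : M2.det = M.det := by rw [hM2def, Matrix.det_mul, hdetE, one_mul]
  have hM2e : ∀ i j, M2 i j = M i j - ∑ k, N i k * M k j := by
    intro i j
    rw [hM2def, hEdef, Matrix.sub_mul, Matrix.one_mul, Matrix.sub_apply, Matrix.mul_apply]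
  -- rows of M2
  have hrowtop : ∀ i j : Fin (v+2), (i:ℕ) < v → M2 i j = M i j := by
    intro i j h
    rw [hM2e i j, Finset.sum_eq_zero (fun k _ => by
      rw [hNa, if_neg (fun hc => by omega), if_neg (fun hc => by omega)]
      ring), sub_zero]
  have hrowv : ∀ j : Fin (v+2), M2 ⟨v, by omega⟩ j = r.coeff (j:ℕ) := by
    intro j
    rw [hM2e]
    have h1 : ∑ k, N ⟨v, by omega⟩ k * M k j = (q * f).coeff (j:ℕ) := by
      rw [hfdef, ← conv_sum v q (fun k hk => hq0 k (by omega)) j]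
      apply Finset.sum_congr rfl
      intro k _
      rw [hNa, hM k j, hfdef]
      simp only [Fin.val_mk]
      by_cases hk : (k:ℕ) < v
      · simp [hk]
      · simp [hk]
    rw [h1, hM]
    simp only [Fin.val_mk]
    rw [if_neg (lt_irrefl v), if_pos (show v - v ≤ (j:ℕ) by omega),
      show (j:ℕ) - (v - v) = (j:ℕ) by omega]
    have h2 : r = g - q * f := by rw [← hfg]; ring
    rw [h2, coeff_sub]
  have hrowv1 : ∀ j : Fin (v+2), M2 ⟨v+1, by omega⟩ j = s.coeff (j:ℕ) := by
    intro j
    have hvv : v + 1 ≠ v := by omega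
    rw [hM2e]
    have h1 : ∑ k, N ⟨v+1, by omega⟩ k * M k j = (c2 * f).coeff (j:ℕ) := by
      rw [hfdef, ← conv_sum v c2 hc20 j]
      apply Finset.sum_congr rfl
      intro k _
      rw [hNa, hM k j, hfdef]
      simp only [Fin.val_mk]
      by_cases hk : (k:ℕ) < v
      · simp [hk, hvv]
      · simp [hk, hvv]
    rw [h1, hM]
    simp only [Fin.val_mk]
    have hXg : (X * g).coeff (j:ℕ) =
        if (v+1) - v ≤ (j:ℕ) then g.coeff ((j:ℕ) - ((v+1) - v)) else 0 := by
      by_cases h0 : (j:ℕ) = 0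
      · rw [h0, if_neg (by omega), mul_coeff_zero, coeff_X_zero, zero_mul]
      · obtain ⟨jn, hj⟩ : ∃ jn, (j:ℕ) = jn + 1 := ⟨(j:ℕ)-1, by omega⟩
        rw [hj, if_pos (by omega), coeff_X_mul]
        congr 1
        omega
    rw [if_neg (show ¬ (v + 1 < v) by omega), ← hXg]
    have h2 : s = X * g - c2 * f := by
      rw [hsdef, hc2def, ← hfg]; ring
    rw [h2, coeff_sub]
  -- block decomposition
  set P : Matrix (Fin v ⊕ Fin 2) (Fin v ⊕ Fin 2) ℤ :=
    M2.submatrix (rowEquiv v).symm (colEquiv v).symm with hPdef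
  have hP21 : P.toBlocks₂₁ = 0 := by
    ext i j
    rw [hPdef]
    simp only [Matrix.toBlocks₂₁, Matrix.of_apply, Matrix.submatrix_apply, Matrix.zero_apply,
      rowEquiv_symm_inr, colEquiv_symm_inl]
    rcases (show (i:ℕ) = 0 ∨ (i:ℕ) = 1 by omega) with h | h
    · rw [show (⟨v + (i:ℕ), by omega⟩ : Fin (v+2)) = ⟨v, by omega⟩ from
        Fin.ext (by simp only [Fin.val_mk]; omega), hrowv, hrc]
      simp only [Fin.val_mk]
      rw [if_neg (by omega), if_neg (by omega)]
    · rw [show (⟨v + (i:ℕ), by omega⟩ : Fin (v+2)) = ⟨v+1, by omega⟩ from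
        Fin.ext (by simp only [Fin.val_mk]; omega), hrowv1, hsc]
      simp only [Fin.val_mk]
      rw [if_neg (by omega), if_neg (by omega)]
  have hPM2 : P = (M2.submatrix id ⇑((rowEquiv v).trans (colEquiv v).symm)).submatrix
      ⇑(rowEquiv v).symm ⇑(rowEquiv v).symm := by
    ext x y
    simp [hPdef, Matrix.submatrix_apply, Equiv.trans_apply, Equiv.apply_symm_apply]
  have hdP : P.det = M2.det := by
    rw [hPM2, Matrix.det_submatrix_equiv_self, Matrix.det_permute', sign_rot]
    simp
  have hblocks : P.det = P.toBlocks₁₁.det * P.toBlocks₂₂.det := by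
    conv_lhs => rw [← Matrix.fromBlocks_toBlocks P, hP21]
    rw [Matrix.det_fromBlocks_zero₂₁]
  have hA : P.toBlocks₁₁.det = 1 := by
    have hentry : ∀ i j : Fin v, P.toBlocks₁₁ i j =
        if (i:ℕ) ≤ (j:ℕ) + 2 then f.coeff ((j:ℕ) + 2 - (i:ℕ)) else 0 := by
      intro i j
      rw [hPdef]
      simp only [Matrix.toBlocks₁₁, Matrix.of_apply, Matrix.submatrix_apply,
        rowEquiv_symm_inl, colEquiv_symm_inl]
      rw [hrowtop _ _ i.isLt, hM]
      simp only [Fin.val_mk]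
      rw [if_pos i.isLt]
    have htri : P.toBlocks₁₁.BlockTriangular OrderDual.toDual := by
      intro i j hij
      have h1 : (i:ℕ) < (j:ℕ) := hij
      rw [hentry, if_pos (by omega), hfdef, fcoeff,
        if_neg (by omega), if_neg (by omega), if_neg (by omega)]
    rw [Matrix.det_of_lowerTriangular _ htri]
    apply Finset.prod_eq_one
    intro i _
    rw [hentry, if_pos (by omega), hfdef, fcoeff,
      if_neg (by omega), if_neg (by omega), if_pos (by omega)]
  have hD : P.toBlocks₂₂.det = 3 := by
    have hentry : ∀ i j : Fin 2, P.toBlocks₂₂ i j =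
        M2 ⟨v + (i:ℕ), by omega⟩ ⟨(j:ℕ), by omega⟩ := by
      intro i j
      rw [hPdef]
      simp only [Matrix.toBlocks₂₂, Matrix.of_apply, Matrix.submatrix_apply,
        rowEquiv_symm_inr, colEquiv_symm_inr]
    rw [Matrix.det_fin_two]
    rw [hentry, hentry, hentry, hentry]
    rw [show (⟨v + ((0 : Fin 2):ℕ), by omega⟩ : Fin (v+2)) = ⟨v, by omega⟩ from
        Fin.ext (by simp),
      show (⟨v + ((1 : Fin 2):ℕ), by omega⟩ : Fin (v+2)) = ⟨v+1, by omega⟩ from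
        Fin.ext (by simp)]
    rw [hrowv, hrowv, hrowv1, hrowv1, hrc, hrc, hsc, hsc]
    simp only [Fin.val_mk, Fin.val_zero, Fin.val_one]
    norm_num
    linear_combination hab
  have hfin : res f g = 3 := by
    rw [hres, ← hdetM2, ← hdP, hblocks, hA, hD, one_mul]
  rw [hfin]
  norm_num
end

section
/- Let n be a positive integer divisible by 6 and let ζ be a primitive sixth root of unity in ℂ. Define G(t) = (t^n - 1)/Φ₆(t) ∈ ℤ[t]. Then G(ζ)·G(ζ̄) = n²/3. -/
open Polynomial

theorem stmt_7 (n : ℕ) (hn : 0 < n) (h6 : 6 ∣ n) (ζ : ℂ)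
    (hζ : IsPrimitiveRoot ζ 6) (G : Polynomial ℤ)
    (hG : (X ^ 2 - X + 1) * G = X ^ n - 1) :
    (aeval ζ G) * (aeval (starRingEnd ℂ ζ) G) = (n : ℂ) ^ 2 / 3 := by
  have h6' : ζ ^ 6 = 1 := hζ.pow_eq_one
  have h3 : ζ ^ 3 = -1 := by
    have hmul : (ζ ^ 3 - 1) * (ζ ^ 3 + 1) = 0 := by linear_combination h6'
    rcases mul_eq_zero.1 hmul with h | h
    · exact absurd (sub_eq_zero.1 h) (hζ.pow_ne_one_of_pos_of_lt (by norm_num) (by norm_num))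
    · linear_combination h
  have hphi : ζ ^ 2 - ζ + 1 = 0 := by
    have hne : ζ + 1 ≠ 0 := by
      intro h
      have hz : ζ = -1 := by linear_combination h
      exact hζ.pow_ne_one_of_pos_of_lt (by norm_num) (by norm_num : 2 < 6) (by rw [hz]; ring)
    have hm : (ζ + 1) * (ζ ^ 2 - ζ + 1) = 0 := by linear_combination h3
    rcases mul_eq_zero.1 hm with h | h
    · exact absurd h hne
    · exact h
  set c := (starRingEnd ℂ) ζ with hcdef
  have habs : ‖ζ‖ = 1 := Complex.norm_eq_one_of_pow_eq_one h6' (by norm_num)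
  have hc1 : ζ * c = 1 := by
    rw [hcdef, Complex.mul_conj, Complex.normSq_eq_norm_sq, habs]; norm_num
  have hsum : ζ + c = 1 := by linear_combination c * hphi + (1 - ζ) * hc1
  have key1 : (2 * ζ - 1) * aeval ζ G = n * ζ ^ (n - 1) := by
    have hd := congrArg (fun p => aeval ζ (derivative p)) hG
    simp only [derivative_mul, derivative_sub, derivative_add, derivative_pow, derivative_X,
      derivative_one, map_add, map_mul, map_sub, map_pow, aeval_X, map_one, map_natCast,
      aeval_natCast, mul_one, map_zero] at hd
    norm_num at hd
    linear_combination hd - (aeval ζ (derivative G)) * hphi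
  have hb : aeval c G = (starRingEnd ℂ) (aeval ζ G) := by
    have h := aeval_algHom_apply ((starRingEnd ℂ).toIntAlgHom) ζ G
    simp only [RingHom.toIntAlgHom_coe] at h
    rw [← hcdef] at h
    exact h
  have key2 : (2 * c - 1) * aeval c G = n * c ^ (n - 1) := by
    have := congrArg (starRingEnd ℂ) key1
    rw [hb]
    simpa [map_mul, map_sub, map_pow, map_ofNat, hcdef] using this
  have hpow : ζ ^ (n - 1) * c ^ (n - 1) = 1 := by rw [← mul_pow, hc1, one_pow]
  set a := aeval ζ G
  set b := aeval c G
  have hkey : 3 * (a * b) = (n : ℂ) ^ 2 := by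
    linear_combination ((2 * c - 1) * b) * key1 + ((n : ℂ) * ζ ^ (n - 1)) * key2 +
      (n : ℂ) ^ 2 * hpow - 4 * a * b * hc1 + 2 * a * b * hsum
  rw [eq_div_iff (by norm_num : (3 : ℂ) ≠ 0)]
  linear_combination hkey
end

section
/- Let n ≥ 1, m ≥ 1, and K = gcd(m-2, n). Suppose 6 ∣ K, 2K ∣ n, and m ≡ K + 2 (mod 2K). Then, up to sign, 2 + L_K divides Res(t^m - t + 1, G(t)), where G(t) = (t^n - 1)/Φ₆(t) and L_K is the K-th Lucas number. -/
open Polynomial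

section GoldRing
/-- The ring ℤ[φ] where φ² = φ + 1: elements `a + b φ`. -/
@[ext]
structure Gold where
  a : ℤ
  b : ℤ
  deriving DecidableEq

namespace Gold

instance : Zero Gold := ⟨⟨0, 0⟩⟩
@[simp] theorem zero_a : (0 : Gold).a = 0 := rfl
@[simp] theorem zero_b : (0 : Gold).b = 0 := rfl
instance : One Gold := ⟨⟨1, 0⟩⟩
@[simp] theorem one_a : (1 : Gold).a = 1 := rfl
@[simp] theorem one_b : (1 : Gold).b = 0 := rfl
instance : Add Gold := ⟨fun z w => ⟨z.1 + w.1, z.2 + w.2⟩⟩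
@[simp] theorem add_a (z w : Gold) : (z + w).a = z.a + w.a := rfl
@[simp] theorem add_b (z w : Gold) : (z + w).b = z.b + w.b := rfl
instance : Neg Gold := ⟨fun z => ⟨-z.1, -z.2⟩⟩
@[simp] theorem neg_a (z : Gold) : (-z).a = -z.a := rfl
@[simp] theorem neg_b (z : Gold) : (-z).b = -z.b := rfl
instance : Mul Gold :=
  ⟨fun z w => ⟨z.1 * w.1 + z.2 * w.2, z.1 * w.2 + z.2 * w.1 + z.2 * w.2⟩⟩
@[simp] theorem mul_a (z w : Gold) : (z * w).a = z.a * w.a + z.b * w.b := rfl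
@[simp] theorem mul_b (z w : Gold) :
    (z * w).b = z.a * w.b + z.b * w.a + z.b * w.b := rfl

instance addCommGroup : AddCommGroup Gold := by
  refine
  { add := (· + ·)
    zero := (0 : Gold)
    sub := fun a b => a + -b
    neg := Neg.neg
    nsmul := @nsmulRec Gold ⟨0⟩ ⟨(· + ·)⟩
    zsmul := @zsmulRec Gold ⟨0⟩ ⟨(· + ·)⟩ ⟨Neg.neg⟩ (@nsmulRec Gold ⟨0⟩ ⟨(· + ·)⟩)
    add_assoc := ?_
    zero_add := ?_
    add_zero := ?_
    neg_add_cancel := ?_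
    add_comm := ?_ } <;>
  intros <;> ext <;> simp [add_comm, add_left_comm]

@[simp] theorem sub_a (z w : Gold) : (z - w).a = z.a - w.a := rfl
@[simp] theorem sub_b (z w : Gold) : (z - w).b = z.b - w.b := rfl

instance addGroupWithOne : AddGroupWithOne Gold :=
  { Gold.addCommGroup with
    natCast := fun n => ⟨n, 0⟩
    intCast := fun n => ⟨n, 0⟩
    natCast_zero := by ext <;> simp
    natCast_succ := fun _ => by ext <;> simp
    intCast_ofNat := fun _ => by ext <;> rfl
    intCast_negSucc := fun x => Gold.ext
      (show Int.negSucc x = -((x + 1 : ℕ) : ℤ) by push_cast [Int.negSucc_eq]; ring)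
      (show (0 : ℤ) = -0 by simp)
    one := 1 }

instance commRing : CommRing Gold := by
  refine
  { Gold.addGroupWithOne with
    mul := (· * ·)
    npow := @npowRec Gold ⟨1⟩ ⟨(· * ·)⟩,
    add_comm := ?_
    left_distrib := ?_
    right_distrib := ?_
    zero_mul := ?_
    mul_zero := ?_
    mul_assoc := ?_
    one_mul := ?_
    mul_one := ?_
    mul_comm := ?_ } <;>
  intros <;> ext <;> simp <;> ring

@[simp] theorem intCast_a (n : ℤ) : (n : Gold).a = n := rfl
@[simp] theorem intCast_b (n : ℤ) : (n : Gold).b = 0 := rfl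

/-- φ, the golden-ratio element. -/
def phi : Gold := ⟨0, 1⟩

/-- Conjugation: φ ↦ 1 - φ. -/
def conj : Gold →+* Gold where
  toFun z := ⟨z.1 + z.2, -z.2⟩
  map_one' := by ext <;> simp
  map_mul' z w := by ext <;> simp <;> ring
  map_zero' := by ext <;> simp
  map_add' z w := by ext <;> simp <;> ring

@[simp] theorem conj_a (z : Gold) : (conj z).a = z.a + z.b := rfl
@[simp] theorem conj_b (z : Gold) : (conj z).b = -z.b := rfl

theorem conj_intCast (n : ℤ) : conj (n : Gold) = n := by ext <;> simp

end Gold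

end GoldRing

section DetLemmas

open Matrix

variable {n : Type*} [DecidableEq n] [Fintype n] {R : Type*} [CommRing R]

lemma det_updateColumn_sum_fun (A : Matrix n n R) (j : n) (F : n → n → R) :
    (A.updateCol j (fun k => ∑ i, F i k)).det = ∑ i, (A.updateCol j (F i)).det := by
  classical
  have H : ∀ s : Finset n, (A.updateCol j (fun k => ∑ i ∈ s, F i k)).det
      = ∑ i ∈ s, (A.updateCol j (F i)).det := by
    intro s
    induction s using Finset.cons_induction with
    | empty =>
        simp only [Finset.sum_empty]
        exact det_eq_zero_of_column_eq_zero j (fun i => by simp [updateCol_apply])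
    | cons a s ha ih =>
        simp only [Finset.sum_cons]
        rw [show (fun k => F a k + ∑ i ∈ s, F i k) = (F a) + (fun k => ∑ i ∈ s, F i k) from rfl,
          det_updateCol_add, ih]
  exact H Finset.univ

lemma det_updateColumn_mulVec (A M : Matrix n n R) (j : n) (v : n → R) :
    (A.updateCol j (M.mulVec v)).det
      = ∑ i, v i * (A.updateCol j (fun k => M k i)).det := by
  have hM : M.mulVec v = fun k => ∑ i, (fun k' => v i • M k' i) k := by
    funext k
    simp [Matrix.mulVec, dotProduct, mul_comm]
  rw [hM, det_updateColumn_sum_fun]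
  congr 1
  funext i
  rw [show (fun k' => v i • M k' i) = v i • (fun k' => M k' i) from rfl,
    det_updateCol_smul]

lemma det_two_updates (M : Matrix n n R) (p q : n) (hpq : p ≠ q) (v w : n → R) :
    ((M.updateCol p (M.mulVec v)).updateCol q (M.mulVec w)).det
      = (v p * w q - v q * w p) * M.det := by
  classical
  set M₁ := M.updateCol p (M.mulVec v) with hM₁
  rw [det_updateColumn_mulVec]
  have key : ∀ i : n, i ≠ p → i ≠ q →
      (M₁.updateCol q (fun k => M k i)).det = 0 := by
    intro i hip hiq
    refine det_zero_of_column_eq hiq ?_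
    intro k
    rw [updateCol_ne hiq, updateCol_self, hM₁, updateCol_ne hip]
  have hsum : ∑ i, w i * (M₁.updateCol q (fun k => M k i)).det
      = ∑ i ∈ ({p, q} : Finset n), w i * (M₁.updateCol q (fun k => M k i)).det := by
    refine (Finset.sum_subset (Finset.subset_univ _) ?_).symm
    intro x _ hx
    simp only [Finset.mem_insert, Finset.mem_singleton] at hx
    push_neg at hx
    rw [key x hx.1 hx.2, mul_zero]
  rw [hsum, Finset.sum_pair hpq]
  -- term q
  have hq : M₁.updateCol q (fun k => M k q) = M₁ := by
    have h1 : (fun k => M k q) = fun k => M₁ k q := by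
      funext k; rw [hM₁, updateCol_ne (Ne.symm hpq)]
    rw [h1, updateCol_eq_self]
  have hdetM₁ : M₁.det = v p * M.det := by
    have hM : M.mulVec v = fun k => ∑ i, v i • M k i := by
      funext k; simp [Matrix.mulVec, dotProduct, mul_comm]
    rw [hM₁, hM, det_updateCol_sum]
    simp
  -- term p
  have hp : (M₁.updateCol q (fun k => M k p)).det = v q * (- M.det) := by
    have hcomm : M₁.updateCol q (fun k => M k p)
        = (M.updateCol q (fun k => M k p)).updateCol p (M.mulVec v) := by
      funext k j
      by_cases hjp : j = p <;> by_cases hjq : j = q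
      · exact absurd (hjp ▸ hjq) hpq
      · subst hjp
        rw [updateCol_ne hpq, updateCol_self, hM₁, updateCol_self]
      · subst hjq
        rw [updateCol_self, updateCol_ne (Ne.symm hpq), updateCol_self]
      · rw [updateCol_ne hjq, updateCol_ne hjp, hM₁, updateCol_ne hjp,
          updateCol_ne hjq]
    rw [hcomm, det_updateColumn_mulVec]
    set B := M.updateCol q (fun k => M k p) with hB
    have keyB : ∀ i : n, i ≠ q → (B.updateCol p (fun k => M k i)).det = 0 := by
      intro i hiq
      by_cases hip : i = p
      · subst hip
        refine det_zero_of_column_eq hpq ?_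
        intro k
        rw [updateCol_self, hB, updateCol_ne (Ne.symm hpq), updateCol_self]
      · refine det_zero_of_column_eq (show i ≠ p from hip) ?_
        intro k
        rw [updateCol_ne (show i ≠ p from hip), hB,
          updateCol_ne (show i ≠ q from hiq), updateCol_self]
    have hswap : (B.updateCol p (fun k => M k q)).det = - M.det := by
      have h2 : B.updateCol p (fun k => M k q) = M.submatrix id (Equiv.swap p q) := by
        funext k j
        rcases eq_or_ne j p with rfl | hjp
        · rw [updateCol_self]
          simp [Equiv.swap_apply_left]
        · rcases eq_or_ne j q with rfl | hjq
          · rw [updateCol_ne hjp, hB, updateCol_self]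
            simp [Equiv.swap_apply_right]
          · rw [updateCol_ne hjp, hB, updateCol_ne hjq]
            simp [Equiv.swap_apply_of_ne_of_ne hjp hjq]
      rw [h2, det_permute', Equiv.Perm.sign_swap hpq]
      simp
    have hsumB : ∑ i, v i * (B.updateCol p (fun k => M k i)).det
        = ∑ i ∈ ({q} : Finset n), v i * (B.updateCol p (fun k => M k i)).det := by
      refine (Finset.sum_subset (Finset.subset_univ _) ?_).symm
      intro x _ hx
      simp only [Finset.mem_singleton] at hx
      rw [keyB x hx, mul_zero]
    rw [hsumB, Finset.sum_singleton, hswap]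
  rw [hq, hdetM₁, hp]
  ring

lemma updateColumn_comm' (A : Matrix n n R) {p q : n} (hpq : p ≠ q) (u v : n → R) :
    (A.updateCol p u).updateCol q v = (A.updateCol q v).updateCol p u := by
  funext k j
  by_cases hjp : j = p <;> by_cases hjq : j = q
  · exact absurd (hjp ▸ hjq) hpq
  · subst hjp
    rw [updateCol_ne hpq, updateCol_self, updateCol_self]
  · subst hjq
    rw [updateCol_self, updateCol_ne (Ne.symm hpq), updateCol_self]
  · rw [updateCol_ne hjq, updateCol_ne hjp, updateCol_ne hjp, updateCol_ne hjq]

end DetLemmas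

/-- The Lucas numbers: `L₀ = 2`, `L₁ = 1`, `L_{k+2} = L_{k+1} + L_k`. -/
def lucas : ℕ → ℤ
  | 0 => 2
  | 1 => 1
  | n + 2 => lucas (n + 1) + lucas n

section SylvesterLemmas

variable {R : Type*} [CommRing R]

lemma shifted_sum (c : ℤ →+* R) (x : R) (p : Polynomial ℤ) (N i : ℕ)
    (hdeg : p.natDegree < N - i) :
    ∑ j ∈ Finset.range N, (if i ≤ j then c (p.coeff (j - i)) * x ^ j else 0)
      = x ^ i * p.eval₂ c x := by
  have hiN : i ≤ N := by omega
  rw [Finset.range_eq_Ico, ← Finset.sum_Ico_consecutive _ (Nat.zero_le i) hiN]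
  have h1 : ∑ j ∈ Finset.Ico 0 i, (if i ≤ j then c (p.coeff (j - i)) * x ^ j else 0) = 0 := by
    refine Finset.sum_eq_zero ?_
    intro j hj
    rw [Finset.mem_Ico] at hj
    rw [if_neg (by omega)]
  rw [h1, zero_add, Finset.sum_Ico_eq_sum_range]
  have h2 : ∀ k, (if i ≤ i + k then c (p.coeff (i + k - i)) * x ^ (i + k) else 0)
      = x ^ i * (c (p.coeff k) * x ^ k) := by
    intro k
    rw [if_pos (Nat.le_add_right i k)]
    have h3 : i + k - i = k := by omega
    rw [h3, pow_add]
    ring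
  rw [Finset.sum_congr rfl (fun k _ => h2 k), ← Finset.mul_sum,
    eval₂_eq_sum_range' c (show p.natDegree < N - i from hdeg) x]

lemma sylvester_mulVec (f g : Polynomial ℤ)
    (c : ℤ →+* R) (x : R) (i : Fin (f.natDegree + g.natDegree)) :
    ((_root_.sylvester f g).map (c : ℤ →+* R)).mulVec (fun j => x ^ (j : ℕ)) i
      = if (i : ℕ) < g.natDegree then x ^ (i : ℕ) * f.eval₂ c x
        else x ^ ((i : ℕ) - g.natDegree) * g.eval₂ c x := by
  have hmv : ((_root_.sylvester f g).map (c : ℤ →+* R)).mulVec (fun j => x ^ (j : ℕ)) i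
      = ∑ j ∈ Finset.range (f.natDegree + g.natDegree),
          (if (i : ℕ) < g.natDegree then
            (if (i : ℕ) ≤ j then c (f.coeff (j - (i : ℕ))) * x ^ j else 0)
          else
            (if (i : ℕ) - g.natDegree ≤ j then
              c (g.coeff (j - ((i : ℕ) - g.natDegree))) * x ^ j else 0)) := by
    rw [Matrix.mulVec, dotProduct,
      ← Fin.sum_univ_eq_sum_range (fun j =>
        (if (i : ℕ) < g.natDegree then
            (if (i : ℕ) ≤ j then c (f.coeff (j - (i : ℕ))) * x ^ j else 0)
          else
            (if (i : ℕ) - g.natDegree ≤ j then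
              c (g.coeff (j - ((i : ℕ) - g.natDegree))) * x ^ j else 0)))]
    apply Finset.sum_congr rfl
    intro j _
    simp only [Matrix.map_apply, _root_.sylvester, Matrix.of_apply]
    split <;> split <;> simp
  rw [hmv]
  by_cases hi : (i : ℕ) < g.natDegree
  · rw [if_pos hi, Finset.sum_congr rfl (fun j _ => if_pos hi),
      shifted_sum c x f (f.natDegree + g.natDegree) (i : ℕ) (by omega)]
  · rw [if_neg hi, Finset.sum_congr rfl (fun j _ => if_neg hi),
      shifted_sum c x g (f.natDegree + g.natDegree) ((i : ℕ) - g.natDegree) (by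
        have := i.isLt
        omega)]

end SylvesterLemmas

section GoldLemmas

open Gold

lemma phi_mul_phi : (phi : Gold) * phi = phi + 1 := by
  ext <;> simp [phi]

lemma lucas_gold (k : ℕ) : (phi : Gold) ^ k + (conj phi) ^ k = ((lucas k : ℤ) : Gold) := by
  induction k using Nat.twoStepInduction with
  | zero =>
      show (1 : Gold) + 1 = ((2 : ℤ) : Gold)
      push_cast
      ring
  | one =>
      show phi + conj phi = ((1 : ℤ) : Gold)
      ext <;> simp [phi]
  | more k ih2 ih1 =>
      have hphi : (phi : Gold) ^ (k + 2) = phi ^ (k + 1) + phi ^ k := by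
        have : (phi : Gold) ^ (k + 2) = phi ^ k * (phi * phi) := by ring
        rw [this, phi_mul_phi]
        ring
      have hpsi : (conj phi : Gold) ^ (k + 2) = conj phi ^ (k + 1) + conj phi ^ k := by
        have h1 : (conj phi : Gold) * conj phi = conj phi + 1 := by
          rw [← map_mul, phi_mul_phi]
          simp
        have : (conj phi : Gold) ^ (k + 2) = conj phi ^ k * (conj phi * conj phi) := by ring
        rw [this, h1]
        ring
      rw [hphi, hpsi, show lucas (k + 2) = lucas (k + 1) + lucas k from rfl]
      push_cast
      rw [← ih1, ← ih2]
      ring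

lemma gold_two_cancel (x y : Gold) (h : (2 : Gold) * x = 2 * y) : x = y := by
  have ha := congrArg Gold.a h
  have hb := congrArg Gold.b h
  have h2a : ((2 : Gold)).a = 2 := rfl
  have h2b : ((2 : Gold)).b = 0 := rfl
  simp only [Gold.mul_a, Gold.mul_b, h2a, h2b] at ha hb
  ext <;> omega

end GoldLemmas

set_option maxHeartbeats 2000000 in
theorem stmt_11 (n m K : ℕ) (hn : 1 ≤ n) (hm : 1 ≤ m)
    (hK : K = Nat.gcd (m - 2) n) (h6 : 6 ∣ K) (h2K : 2 * K ∣ n)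
    (hmod : m ≡ K + 2 [MOD 2 * K]) (G : Polynomial ℤ)
    (hG : (X ^ 2 - X + 1) * G = X ^ n - 1) :
    (2 + lucas K) ∣ res (X ^ m - X + 1) G := by
  classical
  -- arithmetic preliminaries
  have hK0 : K ≠ 0 := by
    rintro rfl
    rw [Nat.mul_zero] at h2K
    have := Nat.eq_zero_of_zero_dvd h2K
    omega
  have hK6 : 6 ≤ K := Nat.le_of_dvd (by omega) h6
  obtain ⟨c3, hc3⟩ : 3 ∣ K := dvd_trans (by norm_num) h6
  have hKeven : Even K := by
    obtain ⟨c2, hc2⟩ : 2 ∣ K := dvd_trans (by norm_num) h6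
    exact ⟨c2, by omega⟩
  obtain ⟨s, hs⟩ := h2K
  have hs1 : 1 ≤ s := by
    rcases Nat.eq_zero_or_pos s with rfl | h
    · omega
    · exact h
  have hmmod : m % (2 * K) = K + 2 := by
    have h1 : (K + 2) % (2 * K) = K + 2 := Nat.mod_eq_of_lt (by omega)
    have := hmod
    unfold Nat.ModEq at this
    omega
  obtain ⟨t, ht⟩ : ∃ t, m = 2 * K * t + (K + 2) :=
    ⟨m / (2 * K), by
      have := Nat.div_add_mod m (2 * K)
      omega⟩
  have hm8 : 8 ≤ m := by omega
  -- degrees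
  set f : Polynomial ℤ := X ^ m - X + 1 with hf
  have hdf : f.natDegree = m := by
    rw [hf]
    compute_degree!
    rw [if_neg (show ¬1 = m by omega), if_neg (show ¬m = 0 by omega)]
    decide
  have hPhi : ((X : Polynomial ℤ) ^ 2 - X + 1).natDegree = 2 := by compute_degree!
  have hXn : ((X : Polynomial ℤ) ^ n - 1).natDegree = n := by
    simpa using Polynomial.natDegree_X_pow_sub_C (n := n) (r := (1 : ℤ))
  have hG0 : G ≠ 0 := by
    rintro rfl
    rw [mul_zero] at hG
    have := congrArg Polynomial.natDegree hG
    rw [hXn, Polynomial.natDegree_zero] at this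
    omega
  have hPhi0 : ((X : Polynomial ℤ) ^ 2 - X + 1) ≠ 0 := by
    intro h
    rw [h, Polynomial.natDegree_zero] at hPhi
    omega
  have hdG : 2 + G.natDegree = n := by
    rw [← hPhi, ← Polynomial.natDegree_mul hPhi0 hG0, hG, hXn]
  -- the golden ring
  set c : ℤ →+* Gold := Int.castRingHom Gold with hc
  set β : Gold := -Gold.phi with hβ
  have hβ2 : β * β = 1 - β := by
    rw [hβ]
    linear_combination phi_mul_phi
  have hβu : β * (β + 1) = 1 := by linear_combination hβ2
  have hβK : β ^ K = Gold.phi ^ K := by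
    rw [hβ]
    exact hKeven.neg_pow Gold.phi
  set u : Gold := Gold.phi ^ K with hu
  set ε : Gold := u + 1 with hε
  -- 2 divides ε
  obtain ⟨y, hy⟩ : (2 * Gold.phi : Gold) ∣ ((2 * Gold.phi + 1) ^ c3 - 1) := by
    have := sub_dvd_pow_sub_pow (2 * Gold.phi + 1) 1 c3
    simpa using this
  have hφ3 : (Gold.phi : Gold) ^ 3 = 2 * Gold.phi + 1 := by
    linear_combination (Gold.phi + 1) * phi_mul_phi
  have hεδ : ∃ δ : Gold, ε = 2 * δ := by
    refine ⟨Gold.phi * y + 1, ?_⟩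
    rw [hε, hu, hc3, pow_mul, hφ3]
    linear_combination hy
  obtain ⟨δ, hδ⟩ := hεδ
  -- evaluations
  have hevalf : f.eval₂ c β = β ^ m - β + 1 := by
    rw [hf]
    simp
  have hevalG : (β * β - β + 1) * G.eval₂ c β = β ^ n - 1 := by
    have := congrArg (Polynomial.eval₂RingHom c β) hG
    simp only [map_mul, map_sub, map_add, map_pow, map_one,
      Polynomial.coe_eval₂RingHom, Polynomial.eval₂_X] at this
    rw [← this]
    ring_nf
  -- ε divides eval f
  obtain ⟨cf, hcf⟩ : ε ∣ f.eval₂ c β := by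
    have hm' : m = K * (2 * t + 1) + 2 := by rw [ht]; ring
    have hpow : β ^ m = u ^ (2 * t + 1) * (β * β) := by
      rw [hm', pow_add, pow_mul, hβK, pow_two]
    obtain ⟨z, hz⟩ : ε ∣ u ^ (2 * t + 1) + 1 := by
      have h1 := sub_dvd_pow_sub_pow u (-1) (2 * t + 1)
      have h2 : (-1 : Gold) ^ (2 * t + 1) = -1 := by
        have : Odd (2 * t + 1) := ⟨t, by ring⟩
        exact this.neg_one_pow
      rw [h2, sub_neg_eq_add, sub_neg_eq_add, ← hε] at h1
      exact h1
    refine ⟨(β * β) * z, ?_⟩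
    rw [hevalf, hpow]
    calc u ^ (2 * t + 1) * (β * β) - β + 1
        = (β * β) * (u ^ (2 * t + 1) + 1) := by linear_combination -hβ2
      _ = (β * β) * (ε * z) := by rw [hz]
      _ = ε * (β * β * z) := by ring
  -- ε divides eval G
  obtain ⟨cg, hcg⟩ : ε ∣ G.eval₂ c β := by
    have hn' : n = K * (2 * s) := by rw [hs]; ring
    have hpow : β ^ n = (u * u) ^ s := by
      rw [hn', pow_mul, hβK, pow_mul, pow_two]
    obtain ⟨z, hz⟩ : (u * u - 1) ∣ β ^ n - 1 := by
      have h1 := sub_dvd_pow_sub_pow (u * u) 1 s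
      rw [one_pow, ← hpow] at h1
      exact h1
    have key : (2 : Gold) * ((β * β) * G.eval₂ c β) = 2 * (ε * ((δ - 1) * z)) := by
      have h4 : β * β - β + 1 = 2 * (β * β) := by linear_combination -hβ2
      have h5 : u * u - 1 = 2 * (ε * (δ - 1)) := by
        have : u = 2 * δ - 1 := by linear_combination hδ - hε
        rw [this, hδ]
        ring
      calc (2 : Gold) * ((β * β) * G.eval₂ c β)
          = (β * β - β + 1) * G.eval₂ c β := by rw [h4]; ring
        _ = β ^ n - 1 := hevalG
        _ = (u * u - 1) * z := hz
        _ = 2 * (ε * ((δ - 1) * z)) := by rw [h5]; ring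
    have key2 : (β * β) * G.eval₂ c β = ε * ((δ - 1) * z) := gold_two_cancel _ _ key
    refine ⟨(β + 1) * (β + 1) * ((δ - 1) * z), ?_⟩
    calc G.eval₂ c β = (β * (β + 1)) * (β * (β + 1)) * G.eval₂ c β := by
          rw [hβu]; ring
      _ = (β + 1) * (β + 1) * ((β * β) * G.eval₂ c β) := by ring
      _ = (β + 1) * (β + 1) * (ε * ((δ - 1) * z)) := by rw [key2]
      _ = ε * ((β + 1) * (β + 1) * ((δ - 1) * z)) := by ring
  -- epsilon times conjugate
  have hnorm : ε * Gold.conj ε = ((2 + lucas K : ℤ) : Gold) := by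
    have h1 : Gold.conj ε = Gold.conj Gold.phi ^ K + 1 := by
      rw [hε, hu, map_add, map_pow, map_one]
    have h2 : (Gold.phi * Gold.conj Gold.phi : Gold) = -1 := by
      ext <;> simp [Gold.phi]
    have h3 : (Gold.phi : Gold) ^ K * Gold.conj Gold.phi ^ K = 1 := by
      rw [← mul_pow, h2, hKeven.neg_one_pow]
    have h4 := lucas_gold K
    rw [hε, hu, h1]
    push_cast
    linear_combination h3 + h4
  -- the matrix computation
  have hNn : f.natDegree + G.natDegree = m + (n - 2) := by omega
  have hN2 : 1 < f.natDegree + G.natDegree := by omega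
  set N := f.natDegree + G.natDegree with hNdef
  set S' : Matrix (Fin N) (Fin N) Gold := (_root_.sylvester f G).map c with hS'
  set v : Fin N → Gold := fun j => β ^ (j : ℕ) with hv
  set w : Fin N → Gold := fun j => (Gold.conj β) ^ (j : ℕ) with hw
  set a : Fin N → Gold := fun i =>
    if (i : ℕ) < G.natDegree then β ^ (i : ℕ) * cf
    else β ^ ((i : ℕ) - G.natDegree) * cg with ha
  have hSv : S'.mulVec v = ε • a := by
    funext i
    rw [hS', hv]
    rw [sylvester_mulVec f G c β i]
    rw [Pi.smul_apply, ha, smul_eq_mul]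
    dsimp only
    by_cases hi : (i : ℕ) < G.natDegree
    · rw [if_pos hi, if_pos hi, hcf]; ring
    · rw [if_neg hi, if_neg hi, hcg]; ring
  have hSw : S'.mulVec w = (Gold.conj ε) • (fun i => Gold.conj (a i)) := by
    funext i
    have h1 : S'.mulVec w i = Gold.conj (S'.mulVec v i) := by
      rw [hS', hv, hw]
      simp only [Matrix.mulVec, dotProduct, Matrix.map_apply]
      rw [map_sum]
      apply Finset.sum_congr rfl
      intro j _
      rw [map_mul, map_pow]
      congr 1
      exact (Gold.conj_intCast _).symm
    rw [h1, hSv]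
    simp only [Pi.smul_apply, smul_eq_mul, map_mul]
  -- apply the determinant lemma
  set p : Fin N := ⟨0, by omega⟩ with hp
  set q : Fin N := ⟨1, by omega⟩ with hq
  have hpq : p ≠ q := by
    rw [hp, hq]
    simp [Fin.ext_iff]
  have hmain := det_two_updates S' p q hpq v w
  rw [hSv, hSw] at hmain
  -- extract the epsilon factors from the determinant
  have hfactor : ((S'.updateCol p (ε • a)).updateCol q
        ((Gold.conj ε) • (fun i => Gold.conj (a i)))).det
      = ε * Gold.conj ε *
        ((S'.updateCol q (fun i => Gold.conj (a i))).updateCol p a).det := by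
    rw [Matrix.det_updateCol_smul, updateColumn_comm' _ hpq,
      Matrix.det_updateCol_smul]
    ring
  rw [hfactor, hnorm] at hmain
  -- compute the small factor
  have hvw : v p * w q - v q * w p = 2 * Gold.phi - 1 := by
    rw [hv, hw, hp, hq]
    show β ^ 0 * Gold.conj β ^ 1 - β ^ 1 * Gold.conj β ^ 0 = 2 * Gold.phi - 1
    rw [pow_zero, pow_one, pow_one, pow_zero, one_mul, mul_one, hβ]
    have e1 : ((2 : Gold)).a = 2 := rfl
    have e2 : ((2 : Gold)).b = 0 := rfl
    ext <;> simp [Gold.phi, e1, e2]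
  rw [hvw] at hmain
  -- determinant of the mapped matrix
  have hdetS : S'.det = ((res f G : ℤ) : Gold) := by
    rw [hS', show res f G = (_root_.sylvester f G).det from rfl]
    exact (RingHom.map_det c (_root_.sylvester f G)).symm
  rw [hdetS] at hmain
  -- descend to the integers
  obtain ⟨D, hend⟩ : ∃ D : Gold,
      ((2 + lucas K : ℤ) : Gold) * D = (2 * Gold.phi - 1) * ((res f G : ℤ) : Gold) :=
    ⟨_, hmain⟩
  have h2phi : ((2 * Gold.phi - 1 : Gold)).a = -1 := by
    have e1 : ((2 : Gold)).a = 2 := rfl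
    have e2 : ((2 : Gold)).b = 0 := rfl
    simp [Gold.phi, e1, e2]
  have h2phib : ((2 * Gold.phi - 1 : Gold)).b = 2 := by
    have e1 : ((2 : Gold)).a = 2 := rfl
    have e2 : ((2 : Gold)).b = 0 := rfl
    simp [Gold.phi, e1, e2]
  have hcomp := congrArg Gold.a hend
  simp only [Gold.mul_a, Gold.intCast_a, Gold.intCast_b, h2phi, h2phib] at hcomp
  refine ⟨-D.a, ?_⟩
  linarith [hcomp]
end

section
/- Let n = 2·3^s with s ≥ 2, and let d be a divisor of 2·3^{s-1} with d ≠ 6. Suppose m - 2 ∈ {n/3, 2n/3}. Then |Res(t^m - t + 1, Φ_d)| = |Res(Φ₆, Φ_d)|. -/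
open Polynomial

lemma coeff_mul_eq_sum_aux (q g : Polynomial ℤ) (k : ℕ) (hq : ∀ t, k ≤ t → q.coeff t = 0)
    (j : ℕ) :
    (q * g).coeff j = ∑ t ∈ Finset.range k, q.coeff t * (g * X ^ t).coeff j := by
  have h2 : ∀ t : ℕ, (g * X ^ t).coeff j = if t ≤ j then g.coeff (j - t) else 0 := fun t =>
    Polynomial.coeff_mul_X_pow' g t j
  set F : ℕ → ℤ := fun t => q.coeff t * (if t ≤ j then g.coeff (j - t) else 0) with hF
  have hL : (q * g).coeff j = ∑ t ∈ Finset.range (j + 1), F t := by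
    rw [Polynomial.coeff_mul, Finset.Nat.sum_antidiagonal_eq_sum_range_succ_mk]
    refine Finset.sum_congr rfl fun t ht => ?_
    simp only [hF]
    rw [if_pos (by simpa using Nat.lt_succ_iff.mp (Finset.mem_range.mp ht))]
  have hR : ∑ t ∈ Finset.range k, q.coeff t * (g * X ^ t).coeff j
      = ∑ t ∈ Finset.range k, F t := by
    refine Finset.sum_congr rfl fun t _ => ?_
    rw [h2 t]
  have hFz1 : ∀ t, k ≤ t → F t = 0 := fun t ht => by simp [hF, hq t ht]
  have hFz2 : ∀ t, j + 1 ≤ t → F t = 0 := fun t ht => by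
    simp [hF, if_neg (by omega : ¬ t ≤ j)]
  have hM1 : ∑ t ∈ Finset.range (j + 1), F t = ∑ t ∈ Finset.range (max k (j + 1)), F t := by
    refine Finset.sum_subset (Finset.range_subset_range.mpr (le_max_right _ _)) fun t _ h2t => ?_
    exact hFz2 t (by simpa using Finset.mem_range.not.mp h2t)
  have hM2 : ∑ t ∈ Finset.range k, F t = ∑ t ∈ Finset.range (max k (j + 1)), F t := by
    refine Finset.sum_subset (Finset.range_subset_range.mpr (le_max_left _ _)) fun t _ h2t => ?_
    exact hFz1 t (by simpa using Finset.mem_range.not.mp h2t)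
  rw [hL, hR, hM1, hM2]

/-- For `g` monic, the resultant equals the determinant of the "multiplication by `f`
modulo `g`" matrix. -/
lemma res_eq_det_mod (f g : Polynomial ℤ) (hg : g.Monic) :
    res f g = (Matrix.of fun i j : Fin g.natDegree =>
      ((X ^ (i : ℕ) * f) %ₘ g).coeff j).det := by
  classical
  set k := f.natDegree with hk
  set e := g.natDegree with he
  set N := k + e with hN
  set A : Matrix (Fin N) (Fin N) ℤ := Matrix.of (fun i l =>
    if (i : ℕ) < e then
      (if (l : ℕ) < e then ((X ^ (i : ℕ) * f) %ₘ g).coeff l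
       else ((X ^ (i : ℕ) * f) /ₘ g).coeff ((l : ℕ) - e))
    else (if (i : ℕ) = (l : ℕ) then 1 else 0)) with hA
  set B : Matrix (Fin N) (Fin N) ℤ := Matrix.of (fun j l =>
    if (l : ℕ) < e then (if (j : ℕ) = (l : ℕ) then 1 else 0)
    else (g * X ^ ((l : ℕ) - e)).coeff j) with hB
  have hgd : g.degree = (e : ℕ) := Polynomial.degree_eq_natDegree hg.ne_zero
  -- coefficients of the quotient vanish from degree k on
  have hqc : ∀ i : ℕ, i < e → ∀ t, k ≤ t → ((X ^ i * f) /ₘ g).coeff t = 0 := by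
    intro i hi t ht
    rcases eq_or_ne f 0 with rfl | hf
    · simp
    rcases Nat.eq_zero_or_pos k with hk0 | hkpos
    · have hdeg : (X ^ i * f).degree < g.degree := by
        rw [hgd]
        refine lt_of_le_of_lt (Polynomial.degree_mul_le _ _) ?_
        calc (X ^ i : Polynomial ℤ).degree + f.degree
            ≤ ((i : ℕ) : WithBot ℕ) + ((k : ℕ) : WithBot ℕ) :=
              add_le_add (Polynomial.degree_X_pow i).le Polynomial.degree_le_natDegree
          _ = ((i + k : ℕ) : WithBot ℕ) := by push_cast; ring
          _ < ((e : ℕ) : WithBot ℕ) := by exact_mod_cast (by omega : i + k < e)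
      rw [(Polynomial.divByMonic_eq_zero_iff hg).mpr hdeg]
      simp
    · have hnd : (X ^ i * f).natDegree = i + k := by
        rw [Polynomial.natDegree_mul (pow_ne_zero i Polynomial.X_ne_zero) hf, Polynomial.natDegree_X_pow]
      have : ((X ^ i * f) /ₘ g).natDegree = i + k - e := by
        rw [Polynomial.natDegree_divByMonic _ hg, hnd]
      refine Polynomial.coeff_eq_zero_of_natDegree_lt ?_
      rw [this]; omega
  have key : _root_.sylvester f g = A * B.transpose := by
    ext i j
    rw [Matrix.mul_apply]
    simp only [Matrix.transpose_apply, hA, hB, Matrix.of_apply]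
    by_cases hi : (i : ℕ) < e
    · -- row of X^i * f
      set r := (X ^ (i : ℕ) * f) %ₘ g with hr
      set q := (X ^ (i : ℕ) * f) /ₘ g with hq
      have hsum : ∑ l : Fin N, (if (i : ℕ) < e then
            (if (l : ℕ) < e then r.coeff l else q.coeff ((l : ℕ) - e))
          else (if (i : ℕ) = (l : ℕ) then 1 else 0)) *
          (if (l : ℕ) < e then (if (j : ℕ) = (l : ℕ) then 1 else 0)
            else (g * X ^ ((l : ℕ) - e)).coeff j)
          = ∑ t ∈ Finset.range N, (if (i : ℕ) < e then
            (if t < e then r.coeff t else q.coeff (t - e))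
          else (if (i : ℕ) = t then 1 else 0)) *
          (if t < e then (if (j : ℕ) = t then 1 else 0)
            else (g * X ^ (t - e)).coeff j) :=
        Fin.sum_univ_eq_sum_range (fun t => (if (i : ℕ) < e then
            (if t < e then r.coeff t else q.coeff (t - e))
          else (if (i : ℕ) = t then 1 else 0)) *
          (if t < e then (if (j : ℕ) = t then 1 else 0)
            else (g * X ^ (t - e)).coeff j)) N
      rw [hsum]
      simp only [if_pos hi]
      have hNsplit : N = e + k := by omega
      rw [hNsplit, Finset.sum_range_add]
      have hsum1 : ∑ t ∈ Finset.range e,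
          (if t < e then r.coeff t else q.coeff (t - e)) *
          (if t < e then (if (j : ℕ) = t then 1 else 0)
            else (g * X ^ (t - e)).coeff j) = r.coeff j := by
        have : ∀ t ∈ Finset.range e,
            (if t < e then r.coeff t else q.coeff (t - e)) *
            (if t < e then (if (j : ℕ) = t then 1 else 0)
              else (g * X ^ (t - e)).coeff j)
            = if (j : ℕ) = t then r.coeff t else 0 := by
          intro t ht
          have ht' : t < e := Finset.mem_range.mp ht
          rw [if_pos ht', if_pos ht']
          by_cases hjt : (j : ℕ) = t <;> simp [hjt]
        rw [Finset.sum_congr rfl this, Finset.sum_ite_eq]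
        by_cases hje : (j : ℕ) < e
        · rw [if_pos (Finset.mem_range.mpr hje)]
        · rw [if_neg (by simpa using hje)]
          refine (Polynomial.coeff_eq_zero_of_degree_lt ?_).symm
          calc r.degree < g.degree := Polynomial.degree_modByMonic_lt _ hg
            _ = (e : ℕ) := hgd
            _ ≤ ((j : ℕ) : WithBot ℕ) := by exact_mod_cast Nat.le_of_not_lt hje
      have hsum2 : ∑ t ∈ Finset.range k,
          (if e + t < e then r.coeff (e + t) else q.coeff (e + t - e)) *
          (if e + t < e then (if (j : ℕ) = (e + t) then 1 else 0)
            else (g * X ^ (e + t - e)).coeff j) = (q * g).coeff j := by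
        rw [coeff_mul_eq_sum_aux q g k (hqc _ hi) j]
        refine Finset.sum_congr rfl fun t _ => ?_
        rw [if_neg (by omega), if_neg (by omega), Nat.add_sub_cancel_left]
      rw [hsum1, hsum2]
      have hmd : r + g * q = X ^ (i : ℕ) * f := Polynomial.modByMonic_add_div _ g
      have : r.coeff j + (q * g).coeff j = (X ^ (i : ℕ) * f).coeff j := by
        rw [mul_comm q g, ← Polynomial.coeff_add, hmd]
      rw [this]
      rw [_root_.sylvester]
      simp only [Matrix.of_apply, if_pos hi]
      rw [mul_comm (X ^ (i : ℕ)) f, Polynomial.coeff_mul_X_pow']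
      exact if_pos hi
    · -- row of X^(i-e) * g : delta row
      have : ∀ l : Fin N, (if (i : ℕ) < e then
            (if (l : ℕ) < e then ((X ^ (i : ℕ) * f) %ₘ g).coeff l
              else ((X ^ (i : ℕ) * f) /ₘ g).coeff ((l : ℕ) - e))
          else (if (i : ℕ) = (l : ℕ) then 1 else 0)) *
          (if (l : ℕ) < e then (if (j : ℕ) = (l : ℕ) then 1 else 0)
            else (g * X ^ ((l : ℕ) - e)).coeff j)
          = if i = l then (if (l : ℕ) < e then (if (j : ℕ) = (l : ℕ) then 1 else 0)
            else (g * X ^ ((l : ℕ) - e)).coeff j) else 0 := by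
        intro l
        rw [if_neg hi]
        by_cases hil : i = l
        · rw [if_pos hil, if_pos (by rw [hil]), one_mul]
        · rw [if_neg hil, if_neg (fun h => hil (Fin.ext h)), zero_mul]
      rw [Finset.sum_congr rfl (fun l _ => this l), Finset.sum_ite_eq,
        if_pos (Finset.mem_univ i)]
      rw [if_neg hi, _root_.sylvester]
      simp only [Matrix.of_apply, if_neg hi]
      rw [Polynomial.coeff_mul_X_pow']
      exact if_neg hi
  -- determinant of B is 1
  have hBdet : B.det = 1 := by
    have hBtri : B.BlockTriangular id := by
      intro l j hjl
      simp only [id] at hjl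
      simp only [hB, Matrix.of_apply]
      by_cases hje : (j : ℕ) < e
      · rw [if_pos hje, if_neg (by exact_mod_cast Fin.val_ne_of_ne (ne_of_gt hjl))]
      · rw [if_neg hje]
        refine Polynomial.coeff_eq_zero_of_natDegree_lt ?_
        refine lt_of_le_of_lt (Polynomial.natDegree_mul_le) ?_
        rw [Polynomial.natDegree_X_pow, ← he]
        have : (j : ℕ) < (l : ℕ) := hjl
        omega
    rw [Matrix.det_of_upperTriangular hBtri]
    refine Finset.prod_eq_one fun l _ => ?_
    simp only [hB, Matrix.of_apply]
    by_cases hle : (l : ℕ) < e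
    · simp [hle]
    · rw [if_neg hle, Polynomial.coeff_mul_X_pow']
      rw [if_pos (by omega)]
      have : (l : ℕ) - ((l : ℕ) - e) = e := by omega
      rw [this]
      exact hg.coeff_natDegree
  -- determinant of A
  have hAdet : A.det = (Matrix.of fun i j : Fin e =>
      ((X ^ (i : ℕ) * f) %ₘ g).coeff j).det := by
    have hN' : e + k = N := by omega
    set σ : Fin e ⊕ Fin k ≃ Fin N := finSumFinEquiv.trans (finCongr hN') with hσ
    have hsub : A.submatrix σ σ = Matrix.fromBlocks
        (Matrix.of fun i j : Fin e => ((X ^ (i : ℕ) * f) %ₘ g).coeff j)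
        (Matrix.of fun (i : Fin e) (j : Fin k) => ((X ^ (i : ℕ) * f) /ₘ g).coeff j)
        0 1 := by
      ext i j
      cases i with
      | inl a =>
        cases j with
        | inl b =>
          simp only [Matrix.submatrix_apply, hσ, hA, Matrix.of_apply, Matrix.fromBlocks_apply₁₁,
            Equiv.trans_apply, finSumFinEquiv_apply_left, finSumFinEquiv_apply_right,
            finCongr_apply, Fin.coe_cast, Fin.coe_castAdd, Fin.coe_natAdd]
          rw [if_pos a.isLt, if_pos b.isLt]
        | inr b =>
          simp only [Matrix.submatrix_apply, hσ, hA, Matrix.of_apply, Matrix.fromBlocks_apply₁₂,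
            Equiv.trans_apply, finSumFinEquiv_apply_left, finSumFinEquiv_apply_right,
            finCongr_apply, Fin.coe_cast, Fin.coe_castAdd, Fin.coe_natAdd]
          rw [if_pos a.isLt, if_neg (by omega), Nat.add_sub_cancel_left]
      | inr a =>
        cases j with
        | inl b =>
          simp only [Matrix.submatrix_apply, hσ, hA, Matrix.of_apply, Matrix.fromBlocks_apply₂₁,
            Equiv.trans_apply, finSumFinEquiv_apply_left, finSumFinEquiv_apply_right,
            finCongr_apply, Fin.coe_cast, Fin.coe_castAdd, Fin.coe_natAdd]
          rw [if_neg (by omega), if_neg (by omega : ¬ (e + (a : ℕ) = (b : ℕ)))]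
          simp
        | inr b =>
          simp only [Matrix.submatrix_apply, hσ, hA, Matrix.of_apply, Matrix.fromBlocks_apply₂₂,
            Equiv.trans_apply, finSumFinEquiv_apply_left, finSumFinEquiv_apply_right,
            finCongr_apply, Fin.coe_cast, Fin.coe_castAdd, Fin.coe_natAdd]
          rw [if_neg (by omega)]
          by_cases hab : a = b
          · subst hab
            simp [Matrix.one_apply]
          · rw [if_neg (fun h => hab (Fin.ext (by omega))), Matrix.one_apply_ne hab]
    calc A.det = (A.submatrix σ σ).det := (Matrix.det_submatrix_equiv_self σ A).symm
      _ = _ := by rw [hsub, Matrix.det_fromBlocks_zero₂₁, Matrix.det_one, mul_one]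
  rw [res, key, Matrix.det_mul, Matrix.det_transpose, hBdet, mul_one, hAdet]

lemma res_congr_left (f₁ f₂ g : Polynomial ℤ) (hg : g.Monic) (h : g ∣ f₁ - f₂) :
    res f₁ g = res f₂ g := by
  rw [res_eq_det_mod _ _ hg, res_eq_det_mod _ _ hg]
  congr 1
  ext i j
  have hmod : (X ^ (i : ℕ) * f₁) %ₘ g = (X ^ (i : ℕ) * f₂) %ₘ g := by
    refine Polynomial.modByMonic_eq_of_dvd_sub hg ?_
    rw [← mul_sub]
    exact Dvd.dvd.mul_left h _
  simp only [Matrix.of_apply, hmod]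

lemma cyclotomic_six : cyclotomic 6 ℤ = X ^ 2 - X + 1 := by
  have h := cyclotomic_expand_eq_cyclotomic_mul (p := 3) (n := 2)
    (by norm_num) (by norm_num) (R := ℤ)
  have h2 : (2 : ℕ) * 3 = 6 := by norm_num
  rw [h2, cyclotomic_two] at h
  have hexp : Polynomial.expand ℤ 3 (X + 1) = X ^ 3 + 1 := by
    rw [map_add, Polynomial.expand_X, map_one]
  rw [hexp] at h
  have hfac : ((X : Polynomial ℤ) ^ 2 - X + 1) * (X + 1) = X ^ 3 + 1 := by ring
  have hX1 : (X + 1 : Polynomial ℤ) ≠ 0 := fun hc => by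
    simpa using congrArg (Polynomial.eval 0) hc
  apply mul_right_cancel₀ hX1
  rw [hfac, ← h]

theorem stmt_13 (s n m : ℕ) (hs : 2 ≤ s) (hn : n = 2 * 3 ^ s) (hm : 0 < m)
    (hm2 : m - 2 = n / 3 ∨ m - 2 = 2 * n / 3)
    (d : ℕ) (hd : d ∣ 2 * 3 ^ (s - 1)) (hd6 : d ≠ 6) :
    |res (X ^ m - X + 1) (cyclotomic d ℤ)| = |res (cyclotomic 6 ℤ) (cyclotomic d ℤ)| := by
  have hs1 : 3 ^ s = 3 ^ (s - 1) * 3 := by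
    rw [← pow_succ]
    congr 1
    omega
  have hn3 : n / 3 = 2 * 3 ^ (s - 1) := by
    rw [hn, hs1, ← mul_assoc]
    exact Nat.mul_div_cancel _ (by norm_num)
  have hn3' : 2 * n / 3 = 4 * 3 ^ (s - 1) := by
    rw [hn, hs1]
    have : 2 * (2 * (3 ^ (s - 1) * 3)) = 4 * 3 ^ (s - 1) * 3 := by ring
    rw [this]
    exact Nat.mul_div_cancel _ (by norm_num)
  have hdm : d ∣ m - 2 := by
    rcases hm2 with h | h
    · rw [h, hn3]; exact hd
    · rw [h, hn3']
      exact hd.trans ⟨2, by ring⟩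
  have hm2pos : 0 < m - 2 := by
    have hp : 0 < 3 ^ (s - 1) := Nat.pow_pos (by norm_num)
    rcases hm2 with h | h
    · rw [h, hn3]; omega
    · rw [h, hn3']; omega
  have hm3 : 2 ≤ m := by omega
  have hkey : cyclotomic d ℤ ∣ (X ^ m - X + 1 : Polynomial ℤ) - cyclotomic 6 ℤ := by
    rw [_root_.cyclotomic_six]
    have hid : (X ^ m - X + 1 : Polynomial ℤ) - (X ^ 2 - X + 1)
        = X ^ 2 * (X ^ (m - 2) - 1) := by
      rw [mul_sub, ← pow_add, (by omega : 2 + (m - 2) = m)]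
      ring
    rw [hid]
    refine Dvd.dvd.mul_left ?_ _
    refine (cyclotomic.dvd_X_pow_sub_one d ℤ).trans ?_
    obtain ⟨t, ht⟩ := hdm
    rw [ht, pow_mul]
    simpa using sub_dvd_pow_sub_pow ((X : Polynomial ℤ) ^ d) 1 t
  rw [res_congr_left _ _ _ (cyclotomic.monic d ℤ) hkey]
end

section
/- Let η be a primitive sixth root of unity, let ε ∈ {2, 4}, and let β₁, β₂ be the roots of P(X) = η^ε X² - X + 1 in ℂ. Then |β₁|·|β₂| = 1, and max(|β₁|, |β₂|) > 3^{1/3}. -/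
theorem stmt_16 (η : ℂ) (hη : IsPrimitiveRoot η 6) (ε : ℕ) (hε : ε = 2 ∨ ε = 4)
    (β₁ β₂ : ℂ) (h₁ : η ^ ε * β₁ ^ 2 - β₁ + 1 = 0)
    (h₂ : η ^ ε * β₂ ^ 2 - β₂ + 1 = 0) (hne : β₁ ≠ β₂) :
    ‖β₁‖ * ‖β₂‖ = 1 ∧
      (3 : ℝ) ^ ((1 : ℝ) / 3) < max ‖β₁‖ ‖β₂‖ := by
  -- η satisfies the 6th cyclotomic polynomial
  have h6 : η ^ 6 = 1 := hη.pow_eq_one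
  have h3ne : η ^ 3 ≠ 1 := hη.pow_ne_one_of_pos_of_lt (by norm_num) (by norm_num)
  have h2ne : η ^ 2 ≠ 1 := hη.pow_ne_one_of_pos_of_lt (by norm_num) (by norm_num)
  have h3 : η ^ 3 = -1 := by
    have : (η ^ 3 - 1) * (η ^ 3 + 1) = 0 := by linear_combination h6
    rcases mul_eq_zero.mp this with h | h
    · exact absurd (by linear_combination h) h3ne
    · linear_combination h
  have hηne : η ≠ -1 := by
    intro h; exact h2ne (by rw [h]; ring)
  have hcyc : η ^ 2 - η + 1 = 0 := by
    have : (η + 1) * (η ^ 2 - η + 1) = 0 := by linear_combination h3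
    rcases mul_eq_zero.mp this with h | h
    · exact absurd (by linear_combination h) hηne
    · exact h
  have hω0 : (η ^ ε) ^ 2 + η ^ ε + 1 = 0 := by
    rcases hε with h | h <;> subst h
    · linear_combination (η ^ 2 + η + 1) * hcyc
    · linear_combination ((η ^ 2 + η + 1) * (η ^ 4 - η ^ 2 + 1)) * hcyc
  obtain ⟨ω, hωeq⟩ : ∃ w : ℂ, w = η ^ ε := ⟨_, rfl⟩
  rw [← hωeq] at h₁ h₂ hω0
  have hω : ω ^ 2 + ω + 1 = 0 := hω0
  have hω3 : ω ^ 3 = 1 := by linear_combination (ω - 1) * hω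
  -- Vieta
  have hdne : β₁ - β₂ ≠ 0 := sub_ne_zero.mpr hne
  have hs : ω * (β₁ + β₂) - 1 = 0 := by
    have key : (ω * (β₁ + β₂) - 1) * (β₁ - β₂) = 0 := by linear_combination h₁ - h₂
    rcases mul_eq_zero.mp key with h | h
    · exact h
    · exact absurd h hdne
  have hp : ω * (β₁ * β₂) = 1 := by linear_combination β₁ * hs - h₁
  have hs2 : β₁ + β₂ = ω ^ 2 := by
    linear_combination ω ^ 2 * hs - (β₁ + β₂) * hω3
  have hp2 : β₁ * β₂ = ω ^ 2 := by
    linear_combination ω ^ 2 * hp - (β₁ * β₂) * hω3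
  -- |ω| = 1
  have habsω : ‖ω‖ = 1 := by
    have h1 : ‖ω‖ ^ 3 = 1 := by
      rw [← norm_pow, hω3, norm_one]
    nlinarith [norm_nonneg ω, sq_nonneg (‖ω‖ - 1),
      sq_nonneg (‖ω‖ + 1)]
  -- product of absolute values
  have habsprod : ‖β₁‖ * ‖β₂‖ = 1 := by
    have := congrArg (‖·‖) hp
    rw [norm_mul, norm_mul, norm_one, habsω, one_mul] at this
    exact this
  refine ⟨habsprod, ?_⟩
  -- conj ω = ω²
  have hmc : ω * (starRingEnd ℂ) ω = 1 := by
    rw [Complex.mul_conj]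
    norm_cast
    rw [← Complex.sq_norm, habsω]; norm_num
  have hconj : (starRingEnd ℂ) ω = ω ^ 2 := by
    linear_combination ω ^ 2 * hmc - (starRingEnd ℂ) ω * hω3
  -- the discriminant
  have hd2 : (β₁ - β₂) ^ 2 = ω ^ 4 - 4 * ω ^ 2 := by
    linear_combination (β₁ + β₂ + ω ^ 2) * hs2 - 4 * hp2
  have hkey : ((β₁ - β₂) ^ 2) * (starRingEnd ℂ) ((β₁ - β₂) ^ 2) = 21 := by
    rw [hd2, map_sub, map_mul, map_pow, map_pow, hconj]
    have h4 : ((starRingEnd ℂ) 4 : ℂ) = 4 := map_ofNat _ 4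
    rw [h4]
    linear_combination (ω^10 - ω^9 - 4*ω^8 + 5*ω^7 - 5*ω^6 + 21*ω^4 - 21*ω^3 + 21*ω - 21) * hω
  have habs4 : ‖β₁ - β₂‖ ^ 4 = 21 := by
    have h1 : (Complex.normSq ((β₁ - β₂) ^ 2) : ℂ) = 21 := by
      rw [← Complex.mul_conj]; exact hkey
    have h2 : Complex.normSq ((β₁ - β₂) ^ 2) = 21 := by exact_mod_cast h1
    have h3' : ‖(β₁ - β₂) ^ 2‖ ^ 2 = 21 := by
      rw [Complex.sq_norm]; exact h2
    rw [norm_pow] at h3'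
    calc ‖β₁ - β₂‖ ^ 4 = (‖β₁ - β₂‖ ^ 2) ^ 2 := by ring
    _ = 21 := h3'
  -- pass to reals
  set A := ‖β₁‖ with hA
  set B := ‖β₂‖ with hB
  have hA0 : 0 ≤ A := norm_nonneg _
  have hB0 : 0 ≤ B := norm_nonneg _
  have htri : ‖β₁ - β₂‖ ≤ A + B := by
    calc ‖β₁ - β₂‖ ≤ ‖β₁‖ + ‖β₂‖ := by
          exact norm_sub_le β₁ β₂
    _ = A + B := rfl
  have hsum4 : 21 ≤ (A + B) ^ 4 := by
    calc (21 : ℝ) = ‖β₁ - β₂‖ ^ 4 := habs4.symm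
    _ ≤ (A + B) ^ 4 := by
        exact pow_le_pow_left₀ (norm_nonneg _) htri 4
  set c : ℝ := (3 : ℝ) ^ ((1 : ℝ) / 3) with hcdef
  have hc0 : 0 < c := Real.rpow_pos_of_pos (by norm_num) _
  have hc3 : c ^ 3 = 3 := by
    rw [hcdef, ← Real.rpow_natCast ((3:ℝ) ^ ((1:ℝ)/3)) 3, ← Real.rpow_mul (by norm_num)]
    norm_num
  have hclo : (1.36 : ℝ) < c := by
    by_contra h
    push_neg at h
    have h2 : c ^ 3 ≤ (1.36 : ℝ) ^ 3 := pow_le_pow_left₀ (le_of_lt hc0) h 3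
    rw [hc3] at h2; norm_num at h2
  have hchi : c < (1.5 : ℝ) := by
    by_contra h
    push_neg at h
    have h2 : (1.5 : ℝ) ^ 3 ≤ c ^ 3 := pow_le_pow_left₀ (by norm_num) h 3
    rw [hc3] at h2; norm_num at h2
  by_contra hcon
  push_neg at hcon
  rw [max_le_iff] at hcon
  obtain ⟨hAc, hBc⟩ := hcon
  have hAB1 : A * B = 1 := habsprod
  have hkey2 : c * (A + B) ≤ c ^ 2 + 1 := by
    nlinarith [mul_nonneg (by linarith : (0:ℝ) ≤ c - A) (by linarith : (0:ℝ) ≤ c - B)]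
  have hsumle : A + B ≤ (c ^ 2 + 1) / c := by
    rw [le_div_iff₀ hc0]
    linarith [hkey2]
  have hfin : (A + B) ^ 4 ≤ ((c ^ 2 + 1) / c) ^ 4 :=
    pow_le_pow_left₀ (by linarith) hsumle 4
  have h21 : 21 * c ^ 4 ≤ (c ^ 2 + 1) ^ 4 := by
    have h5 : (21 : ℝ) ≤ ((c ^ 2 + 1) / c) ^ 4 := le_trans hsum4 hfin
    rw [div_pow, le_div_iff₀ (pow_pos hc0 4)] at h5
    linarith
  have hc4 : c ^ 4 = 3 * c := by linear_combination c * hc3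
  have hexp : (c ^ 2 + 1) ^ 4 = 13 * c ^ 2 + 18 * c + 37 := by
    linear_combination (c^5 + 4*c^3 + 3*c^2 + 6*c + 12) * hc3
  have hquad : 13 * c ^ 2 - 45 * c + 37 < 0 := by
    nlinarith [mul_nonneg (by linarith : (0:ℝ) ≤ c - 1.36) (by linarith : (0:ℝ) ≤ 1.5 - c)]
  rw [hc4, hexp] at h21
  linarith
end

section
/- Suppose n = 2^a·3^s·v and m - 2 = 2^b·3^r·u with a, b, r, s, u, v ≥ 1, gcd(uv, 6) = 1, and v ∣ u. If a ≥ b + 2, or s ≥ r + 2, or (a = b + 1 and s = r + 1), then there exist integers n₁ and m₁ such that n₁ ∣ n, n₁ < n, 2 < m₁ < n₁, m₁ ≡ m (mod n₁), and m₁ ≡ 2 (mod 6). -/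
/-- Helper: once we have a good modulus `n₁`, take `m₁ = m % n₁`. -/
lemma stmt_17_aux (n m n₁ : ℕ) (h6 : 6 ∣ n₁) (hd : n₁ ∣ n) (hlt : n₁ < n) (hm : 2 ≤ m)
    (hm2 : m ≡ 2 [MOD 6]) (hnd : ¬ n₁ ∣ m - 2) :
    ∃ n₁' m₁ : ℕ, n₁' ∣ n ∧ n₁' < n ∧ 2 < m₁ ∧ m₁ < n₁' ∧
      m₁ ≡ m [MOD n₁'] ∧ m₁ ≡ 2 [MOD 6] := by
  have hpos : 0 < n₁ := by
    rcases Nat.eq_zero_or_pos n₁ with h | h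
    · subst h
      have := Nat.eq_zero_of_zero_dvd hd
      omega
    · exact h
  have hmod : m % n₁ ≡ m [MOD n₁] := Nat.mod_modEq m n₁
  have h26 : m % n₁ ≡ 2 [MOD 6] := (Nat.ModEq.of_dvd h6 hmod).trans hm2
  have h26' : (m % n₁) % 6 = 2 := by
    have := h26
    unfold Nat.ModEq at this
    omega
  have h2lt : 2 < m % n₁ := by
    by_contra hle
    have heq : m % n₁ = 2 := by omega
    have : (2 : ℕ) ≡ m [MOD n₁] := heq ▸ hmod
    exact hnd ((Nat.modEq_iff_dvd' hm).mp this)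
  exact ⟨n₁, m % n₁, hd, hlt, h2lt, Nat.mod_lt _ hpos, hmod, h26⟩

theorem stmt_17 (n m a b r s u v : ℕ)
    (ha : 1 ≤ a) (hb : 1 ≤ b) (hr : 1 ≤ r) (hs : 1 ≤ s) (hu : 1 ≤ u) (hv : 1 ≤ v)
    (hm : 2 ≤ m) (hmn : m < n)
    (hneq : n = 2 ^ a * 3 ^ s * v) (hmeq : m - 2 = 2 ^ b * 3 ^ r * u)
    (hgcd : Nat.gcd (u * v) 6 = 1) (hvu : v ∣ u)
    (hcase : a ≥ b + 2 ∨ s ≥ r + 2 ∨ (a = b + 1 ∧ s = r + 1)) :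
    ∃ n₁ m₁ : ℕ, n₁ ∣ n ∧ n₁ < n ∧ 2 < m₁ ∧ m₁ < n₁ ∧
      m₁ ≡ m [MOD n₁] ∧ m₁ ≡ 2 [MOD 6] := by
  -- u is coprime to 2 and 3
  have hu2 : ¬ 2 ∣ u := by
    intro h
    have h1 : (2 : ℕ) ∣ u * v := h.mul_right v
    have h2 : (2 : ℕ) ∣ 6 := by norm_num
    have := Nat.dvd_gcd h1 h2
    rw [hgcd] at this
    omega
  have hu3 : ¬ 3 ∣ u := by
    intro h
    have h1 : (3 : ℕ) ∣ u * v := h.mul_right v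
    have h2 : (3 : ℕ) ∣ 6 := by norm_num
    have := Nat.dvd_gcd h1 h2
    rw [hgcd] at this
    omega
  -- m ≡ 2 [MOD 6]
  have h6m : (6 : ℕ) ∣ m - 2 := by
    rw [hmeq]
    have h2 : (2 : ℕ) ∣ 2 ^ b := dvd_pow_self 2 (by omega)
    have h3 : (3 : ℕ) ∣ 3 ^ r := dvd_pow_self 3 (by omega)
    have : (6 : ℕ) ∣ 2 ^ b * 3 ^ r := by
      have := mul_dvd_mul h2 h3
      norm_num at this ⊢
      exact this
    exact this.mul_right u
  have hm26 : m ≡ 2 [MOD 6] := ((Nat.modEq_iff_dvd' hm).mpr h6m).symm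
  -- 2^(b+1) does not divide m - 2
  have hb2 : ¬ 2 ^ (b + 1) ∣ m - 2 := by
    intro h
    rw [hmeq, pow_succ, mul_assoc] at h
    have h2 : (2 : ℕ) ∣ 3 ^ r * u :=
      (Nat.mul_dvd_mul_iff_left ((Nat.pow_pos (by norm_num) : 0 < 2 ^ b))).mp h
    rcases (Nat.Prime.dvd_mul Nat.prime_two).mp h2 with h' | h'
    · have := Nat.Prime.dvd_of_dvd_pow Nat.prime_two h'
      omega
    · exact hu2 h'
  -- 3^(r+1) does not divide m - 2
  have hr3 : ¬ 3 ^ (r + 1) ∣ m - 2 := by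
    intro h
    have hrw : m - 2 = 3 ^ r * (2 ^ b * u) := by rw [hmeq]; ring
    rw [hrw, pow_succ] at h
    have h2 : (3 : ℕ) ∣ 2 ^ b * u :=
      (Nat.mul_dvd_mul_iff_left ((Nat.pow_pos (by norm_num) : 0 < 3 ^ r))).mp h
    rcases (Nat.Prime.dvd_mul Nat.prime_three).mp h2 with h' | h'
    · have := Nat.Prime.dvd_of_dvd_pow Nat.prime_three h'
      omega
    · exact hu3 h'
  have hv' : 0 < v := hv
  rcases hcase with hc | hc | ⟨hc1, hc2⟩
  · -- a ≥ b + 2 : take n₁ = 2^(b+1) * 3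
    apply stmt_17_aux n m (2 ^ (b + 1) * 3) ?_ ?_ ?_ hm hm26 ?_
    · have : (2 : ℕ) ∣ 2 ^ (b + 1) := dvd_pow_self 2 (by omega)
      have h6 : (6 : ℕ) ∣ 2 ^ (b + 1) * 3 := by
        obtain ⟨k, hk⟩ := this
        exact ⟨k, by rw [hk]; ring⟩
      exact h6
    · rw [hneq]
      have h2 : (2 : ℕ) ^ (b + 1) ∣ 2 ^ a := pow_dvd_pow 2 (by omega)
      have h3 : (3 : ℕ) ∣ 3 ^ s := dvd_pow_self 3 (by omega)
      exact (mul_dvd_mul h2 h3).mul_right v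
    · rw [hneq]
      have h1 : (2 : ℕ) ^ (b + 1) < 2 ^ a := Nat.pow_lt_pow_right (by norm_num) (by omega)
      have h2 : (3 : ℕ) ≤ 3 ^ s := by
        calc (3:ℕ) = 3 ^ 1 := by norm_num
        _ ≤ 3 ^ s := Nat.pow_le_pow_right (by norm_num) hs
      calc 2 ^ (b + 1) * 3 ≤ 2 ^ (b + 1) * 3 ^ s := by
            exact Nat.mul_le_mul_left _ h2
        _ < 2 ^ a * 3 ^ s := by
            exact Nat.mul_lt_mul_of_lt_of_le h1 le_rfl ((Nat.pow_pos (by norm_num) : 0 < 3 ^ s))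
        _ ≤ 2 ^ a * 3 ^ s * v := Nat.le_mul_of_pos_right _ hv'
    · intro h
      exact hb2 ((dvd_mul_right (2 ^ (b + 1)) 3).trans h)
  · -- s ≥ r + 2 : take n₁ = 2 * 3^(r+1)
    apply stmt_17_aux n m (2 * 3 ^ (r + 1)) ?_ ?_ ?_ hm hm26 ?_
    · have : (3 : ℕ) ∣ 3 ^ (r + 1) := dvd_pow_self 3 (by omega)
      obtain ⟨k, hk⟩ := this
      exact ⟨k, by rw [hk]; ring⟩
    · rw [hneq]
      have h2 : (2 : ℕ) ∣ 2 ^ a := dvd_pow_self 2 (by omega)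
      have h3 : (3 : ℕ) ^ (r + 1) ∣ 3 ^ s := pow_dvd_pow 3 (by omega)
      exact (mul_dvd_mul h2 h3).mul_right v
    · rw [hneq]
      have h1 : (3 : ℕ) ^ (r + 1) < 3 ^ s := Nat.pow_lt_pow_right (by norm_num) (by omega)
      have h2 : (2 : ℕ) ≤ 2 ^ a := by
        calc (2:ℕ) = 2^1 := by norm_num
        _ ≤ 2 ^ a := Nat.pow_le_pow_right (by norm_num) ha
      calc 2 * 3 ^ (r + 1) ≤ 2 ^ a * 3 ^ (r + 1) := Nat.mul_le_mul_right _ h2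
        _ < 2 ^ a * 3 ^ s := (Nat.mul_lt_mul_left ((Nat.pow_pos (by norm_num) : 0 < 2 ^ a))).mpr h1
        _ ≤ 2 ^ a * 3 ^ s * v := Nat.le_mul_of_pos_right _ hv'
    · intro h
      exact hr3 ((dvd_mul_left (3 ^ (r + 1)) 2).trans h)
  · -- a = b + 1, s = r + 1 : take n₁ = 2^(b+1) * 3^r
    apply stmt_17_aux n m (2 ^ (b + 1) * 3 ^ r) ?_ ?_ ?_ hm hm26 ?_
    · have h2 : (2 : ℕ) ∣ 2 ^ (b + 1) := dvd_pow_self 2 (by omega)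
      have h3 : (3 : ℕ) ∣ 3 ^ r := dvd_pow_self 3 (by omega)
      have := mul_dvd_mul h2 h3
      norm_num at this ⊢
      exact this
    · rw [hneq, hc1, hc2]
      have h3 : (3 : ℕ) ^ r ∣ 3 ^ (r + 1) := pow_dvd_pow 3 (by omega)
      exact (mul_dvd_mul dvd_rfl h3).mul_right v
    · rw [hneq, hc1, hc2]
      have h1 : (3 : ℕ) ^ r < 3 ^ (r + 1) := Nat.pow_lt_pow_right (by norm_num) (by omega)
      calc 2 ^ (b + 1) * 3 ^ r < 2 ^ (b + 1) * 3 ^ (r + 1) :=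
            (Nat.mul_lt_mul_left ((Nat.pow_pos (by norm_num) : 0 < 2 ^ (b + 1)))).mpr h1
        _ ≤ 2 ^ (b + 1) * 3 ^ (r + 1) * v := Nat.le_mul_of_pos_right _ hv'
    · intro h
      exact hb2 ((dvd_mul_right (2 ^ (b + 1)) (3 ^ r)).trans h)
end
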